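/- Let r ≥ 2 be an integer, let n > 0 be a real number, and let x_1, …, x_r be positive real numbers with x_1 + ⋯ + x_r ≤ n. Then ∏_{ℓ=1}^{r−1} x_ℓ/(x_ℓ + x_{ℓ+1} + ⋯ + x_r) ≤ (1 − (x_r/n)^{1/(r−1)})^{r−1}. -/

import Mathlib

/-- for positive reals `x_1, …, x_r` with `x_1 + ⋯ + x_r ≤ n`,
`∏_{ℓ=1}^{r−1} x_ℓ/(x_ℓ + ⋯ + x_r) ≤ (1 − (x_r/n)^{1/(r−1)})^{r−1}`. -/
theorem stmt13 (r : ℕ) (hr : 2 ≤ r) (n : ℝ) (hn : 0 < n) (x : ℕ → ℝ)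
    (hx : ∀ i ∈ Finset.Icc 1 r, 0 < x i)
    (hsum : ∑ i ∈ Finset.Icc 1 r, x i ≤ n) :
    ∏ ℓ ∈ Finset.Icc 1 (r - 1), (x ℓ / ∑ j ∈ Finset.Icc ℓ r, x j) ≤
      (1 - (x r / n) ^ ((1 : ℝ) / ((r : ℝ) - 1))) ^ (r - 1) := by
  set m := r - 1 with hm
  have hm1 : 1 ≤ m := by omega
  have hrm : r = m + 1 := by omega
  have hmR : ((r : ℝ) - 1) = (m : ℝ) := by rw [hrm]; push_cast; ring
  have hmpos : (0 : ℝ) < m := by exact_mod_cast hm1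
  set S : ℕ → ℝ := fun ℓ => ∑ j ∈ Finset.Icc ℓ r, x j with hS
  have hSpos : ∀ ℓ, 1 ≤ ℓ → ℓ ≤ r → 0 < S ℓ := by
    intro ℓ h1 hℓ
    apply Finset.sum_pos
    · intro i hi
      rw [Finset.mem_Icc] at hi
      exact hx i (Finset.mem_Icc.mpr ⟨by omega, hi.2⟩)
    · exact ⟨r, Finset.mem_Icc.mpr ⟨hℓ, le_refl r⟩⟩
  -- decomposition S ℓ = x ℓ + S (ℓ+1) for 1 ≤ ℓ ≤ r
  have hdec : ∀ ℓ, 1 ≤ ℓ → ℓ ≤ r → S ℓ = x ℓ + S (ℓ + 1) := by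
    intro ℓ h1 h2
    have hins : Finset.Icc ℓ r = insert ℓ (Finset.Icc (ℓ + 1) r) := by
      ext a; simp only [Finset.mem_Icc, Finset.mem_insert]; omega
    rw [hS]
    simp only
    rw [hins, Finset.sum_insert (by simp [Finset.mem_Icc])]
  set t : ℕ → ℝ := fun ℓ => S (ℓ + 1) / S ℓ with ht
  -- rewrite each factor
  have hfac : ∀ ℓ ∈ Finset.Icc 1 m, x ℓ / S ℓ = 1 - t ℓ := by
    intro ℓ hℓ
    rw [Finset.mem_Icc] at hℓ
    have h2 : ℓ ≤ r := by omega
    have hSℓ := hSpos ℓ hℓ.1 h2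
    simp only [ht]; rw [eq_sub_iff_add_eq, ← add_div, div_eq_one_iff_eq hSℓ.ne', ← eq_sub_iff_add_eq]
    rw [hdec ℓ hℓ.1 h2]; ring
  have htpos : ∀ ℓ ∈ Finset.Icc 1 m, 0 < t ℓ := by
    intro ℓ hℓ
    rw [Finset.mem_Icc] at hℓ
    exact div_pos (hSpos (ℓ + 1) (by omega) (by omega)) (hSpos ℓ (by omega) (by omega))
  have htlt : ∀ ℓ ∈ Finset.Icc 1 m, t ℓ < 1 := by
    intro ℓ hℓ
    rw [Finset.mem_Icc] at hℓ
    have h2 : ℓ ≤ r := by omega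
    rw [ht]
    have hSℓ := hSpos ℓ hℓ.1 h2
    rw [div_lt_one hSℓ, hdec ℓ hℓ.1 h2]
    have := hx ℓ (Finset.mem_Icc.mpr ⟨hℓ.1, h2⟩)
    linarith
  -- telescoping product
  have htel : ∀ k, k ≤ m → ∏ ℓ ∈ Finset.Icc 1 k, t ℓ = S (k + 1) / S 1 := by
    intro k hk
    induction k with
    | zero => simp [div_self (ne_of_gt (hSpos 1 (by omega) (by omega)))]
    | succ p ih =>
        rw [Finset.prod_Icc_succ_top (by omega), ih (by omega), ht]
        have hp1 : S (p + 1) ≠ 0 := (hSpos (p + 1) (by omega) (by omega)).ne'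
        have h1' : S 1 ≠ 0 := (hSpos 1 (by omega) (by omega)).ne'
        field_simp
  have hprod_t : ∏ ℓ ∈ Finset.Icc 1 m, t ℓ = x r / S 1 := by
    rw [htel m le_rfl, ← hrm]
    congr 1
    rw [hS]; simp
  have hS1pos := hSpos 1 (by omega) (by omega)
  have hS1n : S 1 ≤ n := hsum
  have hxr := hx r (Finset.mem_Icc.mpr ⟨by omega, le_rfl⟩)
  -- weights
  set w : ℕ → ℝ := fun _ => 1 / (m : ℝ) with hw
  have hwnn : ∀ i ∈ Finset.Icc 1 m, 0 ≤ w i := fun i _ => by positivity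
  have hwsum : ∑ i ∈ Finset.Icc 1 m, w i = 1 := by
    rw [Finset.sum_const, Nat.card_Icc]
    simp only [hw, nsmul_eq_mul]
    rw [show m + 1 - 1 = m from rfl]
    field_simp
  -- AM-GM for 1 - t
  have hA : ∏ ℓ ∈ Finset.Icc 1 m, (1 - t ℓ) ^ ((1:ℝ)/(m:ℝ)) ≤
      ∑ ℓ ∈ Finset.Icc 1 m, w ℓ * (1 - t ℓ) :=
    Real.geom_mean_le_arith_mean_weighted _ w _ hwnn hwsum
      (fun i hi => by linarith [htlt i hi])
  -- AM-GM for t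
  have hB : ∏ ℓ ∈ Finset.Icc 1 m, (t ℓ) ^ ((1:ℝ)/(m:ℝ)) ≤
      ∑ ℓ ∈ Finset.Icc 1 m, w ℓ * t ℓ :=
    Real.geom_mean_le_arith_mean_weighted _ w _ hwnn hwsum
      (fun i hi => (htpos i hi).le)
  have hsum_split : ∑ ℓ ∈ Finset.Icc 1 m, w ℓ * (1 - t ℓ) =
      1 - ∑ ℓ ∈ Finset.Icc 1 m, w ℓ * t ℓ := by
    have h1 : ∑ ℓ ∈ Finset.Icc 1 m, w ℓ * (1 - t ℓ) =
        (∑ ℓ ∈ Finset.Icc 1 m, w ℓ) - ∑ ℓ ∈ Finset.Icc 1 m, w ℓ * t ℓ := by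
      rw [← Finset.sum_sub_distrib]
      exact Finset.sum_congr rfl fun i _ => by ring
    rw [h1, hwsum]
  -- combine products of rpow
  have hprodA : ∏ ℓ ∈ Finset.Icc 1 m, (1 - t ℓ) ^ ((1:ℝ)/(m:ℝ)) =
      (∏ ℓ ∈ Finset.Icc 1 m, (1 - t ℓ)) ^ ((1:ℝ)/(m:ℝ)) :=
    Real.finset_prod_rpow _ _ (fun i hi => by linarith [htlt i hi]) _
  have hprodB : ∏ ℓ ∈ Finset.Icc 1 m, (t ℓ) ^ ((1:ℝ)/(m:ℝ)) =
      (x r / S 1) ^ ((1:ℝ)/(m:ℝ)) := by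
    rw [Real.finset_prod_rpow _ _ (fun i hi => (htpos i hi).le), hprod_t]
  -- (x r / n)^(1/m) ≤ AM(t)
  have hxn_le : (x r / n) ^ ((1:ℝ)/(m:ℝ)) ≤ ∑ ℓ ∈ Finset.Icc 1 m, w ℓ * t ℓ := by
    refine le_trans ?_ (hprodB ▸ hB)
    apply Real.rpow_le_rpow (by positivity) _ (by positivity)
    apply div_le_div_of_nonneg_left hxr.le hS1pos hS1n
  set P := ∏ ℓ ∈ Finset.Icc 1 m, (1 - t ℓ) with hP
  have hPnn : 0 ≤ P := Finset.prod_nonneg fun i hi => by linarith [htlt i hi]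
  have hgoal_eq : ∏ ℓ ∈ Finset.Icc 1 m, (x ℓ / S ℓ) = P := Finset.prod_congr rfl hfac
  have hPrpow : (P ^ ((1:ℝ)/(m:ℝ))) ^ m = P := by
    rw [← Real.rpow_natCast (P ^ ((1:ℝ)/(m:ℝ))) m, ← Real.rpow_mul hPnn]
    rw [one_div_mul_cancel (by positivity : (m:ℝ) ≠ 0), Real.rpow_one]
  calc ∏ ℓ ∈ Finset.Icc 1 m, (x ℓ / S ℓ) = (P ^ ((1:ℝ)/(m:ℝ))) ^ m := by
        rw [hgoal_eq, hPrpow]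
    _ ≤ (1 - ∑ ℓ ∈ Finset.Icc 1 m, w ℓ * t ℓ) ^ m := by
        apply pow_le_pow_left₀ (Real.rpow_nonneg hPnn _)
        rw [← hsum_split]; rw [hP, ← hprodA]; exact hA
    _ ≤ (1 - (x r / n) ^ ((1:ℝ)/((r:ℝ) - 1))) ^ m := by
        apply pow_le_pow_left₀
        · have h0 : (0:ℝ) ≤ P ^ ((1:ℝ)/(m:ℝ)) := Real.rpow_nonneg hPnn _
          have := hA.trans_eq hsum_split
          rw [hprodA] at this
          linarith
        · rw [hmR]; linarith [hxn_le]
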